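/- Let V₁,...,Vₙ be i.i.d. nonnegative random variables with CDF G, and let τ₁ be a threshold. Define ALG as the reward of an algorithm that selects uniformly at random one reward among those exceeding τ₁ (if any). Then E[ALG] ≥ (1 - G(τ₁)^n)·τ₁ + P_n(G(τ₁))·∑_{i=1}^n E[(V_i - τ₁)^+], where P_n(x) = (1/n)(1-x^n)/(1-x). -/

import Mathlib

open MeasureTheory ProbabilityTheory Finset
open scoped NNReal ENNReal

lemma aux_alt (m : ℕ) (p : ℝ) (hp : p ≠ 0) :
    ∑ k ∈ Finset.range (m + 1), (m.choose k : ℝ) * ((-p) ^ k / (k + 1))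
      = (1 - (1 - p) ^ (m + 1)) / ((m + 1) * p) := by
  have hm : ((m:ℝ) + 1) * p ≠ 0 := by
    have h1 : ((m:ℝ) + 1) ≠ 0 := by positivity
    exact mul_ne_zero h1 hp
  rw [eq_div_iff hm, Finset.sum_mul]
  have hterm : ∀ k ∈ Finset.range (m + 1),
      (m.choose k : ℝ) * ((-p) ^ k / (k + 1)) * (((m:ℝ) + 1) * p)
        = -((-p) ^ (k+1) * ((m+1).choose (k+1) : ℝ)) := by
    intro k _
    have hc : ((m:ℝ) + 1) * (m.choose k : ℝ) = ((m+1).choose (k+1) : ℝ) * ((k:ℝ) + 1) := by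
      exact_mod_cast Nat.add_one_mul_choose_eq m k
    have hk : ((k:ℝ) + 1) ≠ 0 := by positivity
    calc (m.choose k : ℝ) * ((-p) ^ k / (k + 1)) * (((m:ℝ) + 1) * p)
        = (((m:ℝ)+1) * (m.choose k : ℝ)) * ((-p)^k * p / ((k:ℝ)+1)) := by ring
      _ = (((m+1).choose (k+1) : ℝ) * ((k:ℝ)+1)) * ((-p)^k * p / ((k:ℝ)+1)) := by rw [hc]
      _ = ((m+1).choose (k+1) : ℝ) * ((-p)^k * p) := by field_simp
      _ = -((-p) ^ (k+1) * ((m+1).choose (k+1) : ℝ)) := by rw [pow_succ]; ring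
  rw [Finset.sum_congr rfl hterm]
  have hbin : (1 - p) ^ (m + 1)
      = ∑ j ∈ Finset.range (m + 2), (-p) ^ j * (1:ℝ) ^ (m + 1 - j) * (m+1).choose j := by
    rw [show (1 - p : ℝ) = -p + 1 by ring, add_pow]
  rw [Finset.sum_range_succ'] at hbin
  simp only [pow_zero, one_mul, Nat.choose_zero_right, Nat.cast_one, mul_one, one_pow] at hbin
  rw [hbin, Finset.sum_neg_distrib]
  ring

lemma aux_pow {J : Type*} [DecidableEq J] (b : Finset J) (p : ℝ) (hp : p ≠ 0) :
    ∑ T ∈ b.powerset, (-p) ^ T.card / (T.card + 1 : ℝ)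
      = (1 - (1 - p) ^ (b.card + 1)) / ((b.card + 1) * p) := by
  rw [Finset.sum_powerset_apply_card (fun k => (-p) ^ k / (k + 1 : ℝ))]
  rw [← aux_alt b.card p hp]
  exact Finset.sum_congr rfl fun k _ => by rw [nsmul_eq_mul]

lemma aux_point {J : Type*} [DecidableEq J] {s b : Finset J} (hbs : b ⊆ s) :
    ∑ T ∈ s.powerset, ((-1:ℝ)) ^ T.card / (T.card + 1) * (if T ⊆ b then 1 else 0)
      = 1 / (b.card + 1) := by
  have h1 : ∀ T ∈ s.powerset, ((-1:ℝ))^T.card/(T.card+1) * (if T ⊆ b then 1 else 0)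
      = if T ⊆ b then ((-1:ℝ))^T.card/(T.card+1) else 0 := by
    intro T _; split <;> simp
  rw [Finset.sum_congr rfl h1, ← Finset.sum_filter]
  have h2 : s.powerset.filter (fun T => T ⊆ b) = b.powerset := by
    ext T
    simp only [Finset.mem_filter, Finset.mem_powerset]
    exact ⟨fun h => h.2, fun h => ⟨h.trans hbs, h⟩⟩
  rw [h2]
  have h3 : ∀ T ∈ b.powerset, ((-1:ℝ))^T.card/(T.card+1 : ℝ)
      = (-(1:ℝ))^T.card/(T.card+1 : ℝ) := by intro T _; norm_num
  rw [Finset.sum_congr rfl h3, aux_pow b 1 one_ne_zero]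
  simp

/-- One round of the descending auction: selecting uniformly at random a reward exceeding
the threshold `τ` (if any) yields expected reward at least
`(1 - G(τ)^n)·τ + P_n(G(τ))·∑ᵢ E[(Vᵢ - τ)⁺]`, where `P_n(x) = (1/n)(1-xⁿ)/(1-x)`. -/
theorem stmt6 {Ω : Type*} [MeasurableSpace Ω] (μ : Measure Ω) [IsProbabilityMeasure μ]
    (n : ℕ) (hn : 0 < n) (V : Fin n → Ω → ℝ) (τ : ℝ) (hτ : 0 ≤ τ)
    (hmeas : ∀ i, Measurable (V i)) (hnn : ∀ i ω, 0 ≤ V i ω)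
    (hindep : iIndepFun V μ)
    (G : ℝ → ℝ) (hG : ∀ i t, (μ {ω | V i ω ≤ t}).toReal = G t)
    (sel : Ω → Option (Fin n))
    (hselpass : ∀ ω i, sel ω = some i → τ < V i ω)
    (hselnone : ∀ ω, sel ω = none ↔ ∀ i, V i ω ≤ τ)
    (hsel_meas : ∀ i, MeasurableSet {ω | sel ω = some i})
    (hunif : ∀ i A, MeasurableSet A →
      (μ (A ∩ {ω | sel ω = some i})).toReal
        = ∫ ω in A, (if τ < V i ω then
            (1 : ℝ) / (Finset.univ.filter (fun j => τ < V j ω)).card else 0) ∂μ)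
    (ALG : Ω → ℝ) (hALG : ∀ ω, ALG ω = (sel ω).elim 0 (fun i => V i ω))
    (hint : ∀ i, Integrable (V i) μ) (hintALG : Integrable ALG μ) :
    (1 - G τ ^ n) * τ
        + ((1 / (n : ℝ)) * (1 - G τ ^ n) / (1 - G τ))
          * ∑ i, ∫ ω, max (V i ω - τ) 0 ∂μ
      ≤ ∫ ω, ALG ω ∂μ := by
  classical
  set q : ℝ := G τ with hqdef
  set S : Fin n → Set Ω := fun i => {ω | sel ω = some i} with hSdef
  have i0 : Fin n := ⟨0, hn⟩
  -- basic bounds on q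
  have hq0 : 0 ≤ q := by rw [hqdef, ← hG i0 τ]; exact ENNReal.toReal_nonneg
  have hq1 : q ≤ 1 := by
    rw [hqdef, ← hG i0 τ]
    exact le_trans (ENNReal.toReal_mono ENNReal.one_ne_top prob_le_one) (by norm_num)
  -- ALG is nonneg
  have hALGnn : ∀ ω, 0 ≤ ALG ω := by
    intro ω
    rw [hALG]
    cases h : sel ω with
    | none => simp
    | some i => simpa using hnn i ω
  by_cases hqe : q = 1
  · -- degenerate case
    have h1 : (1 : ℝ) - q ^ n = 0 := by rw [hqe]; simp
    have h2 : (1 : ℝ) - q = 0 := by rw [hqe]; ring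
    rw [h1, h2]
    simp only [zero_mul, mul_zero, div_zero, zero_add, zero_mul]
    exact integral_nonneg hALGnn
  -- main case
  have hqlt : q < 1 := lt_of_le_of_ne hq1 hqe
  set p : ℝ := 1 - q with hpdef
  have hp : 0 < p := by rw [hpdef]; linarith
  -- measurability of threshold events
  have hAmeas : ∀ j, MeasurableSet {ω | τ < V j ω} :=
    fun j => measurableSet_lt measurable_const (hmeas j)
  -- single-event probability
  have hmuA : ∀ j, (μ {ω | τ < V j ω}).toReal = p := by
    intro j
    have hc : {ω | τ < V j ω} = {ω | V j ω ≤ τ}ᶜ := by ext ω; simp [not_le]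
    rw [hc, prob_compl_eq_one_sub (measurableSet_le (hmeas j) measurable_const),
      ENNReal.toReal_sub_of_le prob_le_one ENNReal.one_ne_top, ENNReal.toReal_one, hG j τ]
  -- intersection probabilities
  have hmuB : ∀ T : Finset (Fin n), (μ (⋂ j ∈ T, {ω | τ < V j ω})).toReal = p ^ T.card := by
    intro T
    simp only [show ∀ j : Fin n, {ω | τ < V j ω} = V j ⁻¹' Set.Ioi τ from fun j => rfl]
    rw [hindep.meas_biInter (fun j _ => ⟨Set.Ioi τ, measurableSet_Ioi, rfl⟩),
      ENNReal.toReal_prod]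
    have hA' : ∀ j : Fin n, (μ (V j ⁻¹' Set.Ioi τ)).toReal = p := fun j => hmuA j
    rw [Finset.prod_congr rfl (fun j _ => hA' j), Finset.prod_const]
  -- split of ∫ ALG
  have hALGsum : ∫ ω, ALG ω ∂μ = ∑ i, ∫ ω in S i, V i ω ∂μ := by
    have h1 : ∀ ω, ALG ω = ∑ i, (S i).indicator (V i) ω := by
      intro ω
      rw [hALG]
      cases h : sel ω with
      | none =>
        simp only [Option.elim]
        symm
        apply Finset.sum_eq_zero
        intro i _
        apply Set.indicator_of_notMem
        simp [hSdef, h]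
      | some i =>
        simp only [Option.elim]
        symm
        rw [Finset.sum_eq_single i]
        · exact Set.indicator_of_mem (by simp [hSdef, h]) _
        · intro j _ hji
          apply Set.indicator_of_notMem
          simp only [hSdef, Set.mem_setOf_eq, h]
          intro e
          exact hji (Option.some_injective _ e).symm
        · intro habs; exact absurd (Finset.mem_univ i) habs
    calc ∫ ω, ALG ω ∂μ = ∫ ω, ∑ i, (S i).indicator (V i) ω ∂μ := by
          simp only [h1]
      _ = ∑ i, ∫ ω, (S i).indicator (V i) ω ∂μ :=
          integral_finset_sum _ (fun i _ => (hint i).indicator (hsel_meas i))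
      _ = ∑ i, ∫ ω in S i, V i ω ∂μ :=
          Finset.sum_congr rfl fun i _ => integral_indicator (hsel_meas i)
  -- per-set split
  have hSint : ∀ i, ∫ ω in S i, V i ω ∂μ
      = τ * (μ (S i)).toReal + ∫ ω in S i, max (V i ω - τ) 0 ∂μ := by
    intro i
    have hEq : Set.EqOn (V i) (fun ω => τ + max (V i ω - τ) 0) (S i) := by
      intro ω hω
      have hlt := hselpass ω i hω
      simp only
      rw [max_eq_left (by linarith : (0:ℝ) ≤ V i ω - τ)]
      ring
    have hInt1 : IntegrableOn (fun _ : Ω => τ) (S i) μ :=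
      integrableOn_const (measure_ne_top μ _) (by simp)
    have hInt2 : IntegrableOn (fun ω => max (V i ω - τ) 0) (S i) μ :=
      (((hint i).sub (integrable_const τ)).pos_part).integrableOn
    rw [setIntegral_congr_fun (hsel_meas i) hEq]
    have := integral_add hInt1 hInt2
    rw [this, setIntegral_const, smul_eq_mul, Measure.real, mul_comm]
  -- total selection probability
  have hSsum : ∑ i, (μ (S i)).toReal = 1 - q ^ n := by
    have hnone : {ω | sel ω = none} = ⋂ j, {ω | V j ω ≤ τ} := by
      ext ω
      simp only [Set.mem_setOf_eq, Set.mem_iInter, hselnone ω]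
    have hmuNone : (μ {ω | sel ω = none}).toReal = q ^ n := by
      rw [hnone]
      simp only [show ∀ j : Fin n, {ω | V j ω ≤ τ} = V j ⁻¹' Set.Iic τ from fun j => rfl]
      rw [hindep.meas_iInter (fun j => ⟨Set.Iic τ, measurableSet_Iic, rfl⟩),
        ENNReal.toReal_prod]
      have : ∀ j : Fin n, (μ (V j ⁻¹' Set.Iic τ)).toReal = q := fun j => hG j τ
      rw [Finset.prod_congr rfl (fun j _ => this j), Finset.prod_const,
        Finset.card_univ, Fintype.card_fin]
    have hnonemeas : MeasurableSet {ω | sel ω = none} := by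
      rw [hnone]
      exact MeasurableSet.iInter fun j => measurableSet_le (hmeas j) measurable_const
    have hU : ⋃ i, S i = {ω | sel ω = none}ᶜ := by
      ext ω
      simp only [Set.mem_iUnion, Set.mem_compl_iff, Set.mem_setOf_eq, hSdef]
      cases h : sel ω <;> simp [h]
    have hdisjS : Pairwise (Function.onFun Disjoint S) := by
      intro i j hij
      rw [Function.onFun, Set.disjoint_left]
      intro ω hi hj
      exact hij (Option.some_injective _ ((Set.mem_setOf_eq ▸ hi).symm.trans hj))
    rw [← ENNReal.toReal_sum (fun _ _ => measure_ne_top μ _), ← tsum_fintype (L := SummationFilter.unconditional _),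
      ← measure_iUnion hdisjS (fun i => hsel_meas i), hU,
      prob_compl_eq_one_sub hnonemeas,
      ENNReal.toReal_sub_of_le prob_le_one ENNReal.one_ne_top, ENNReal.toReal_one, hmuNone]
  -- density identity
  have hkey : ∀ i, ∫ ω in S i, max (V i ω - τ) 0 ∂μ
      = ((1 - q ^ n) / (n * p)) * ∫ ω, max (V i ω - τ) 0 ∂μ := by
    intro i
    set s : Finset (Fin n) := Finset.univ.erase i with hsdef
    have hscard : s.card + 1 = n := by
      rw [hsdef, Finset.card_erase_of_mem (Finset.mem_univ i), Finset.card_univ,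
        Fintype.card_fin]
      omega
    set N : Ω → ℕ := fun ω => (Finset.univ.filter (fun j => τ < V j ω)).card with hNdef
    have hNmeas : Measurable N := by
      have hN2 : N = fun ω => ∑ j : Fin n, if τ < V j ω then 1 else 0 := by
        funext ω
        simp only [hNdef]
        exact Finset.card_filter _ _
      rw [hN2]
      exact Finset.measurable_sum _
        (fun j _ => Measurable.ite (hAmeas j) measurable_const measurable_const)
    set D : Ω → ℝ≥0 := fun ω => if τ < V i ω then ((N ω : ℝ≥0))⁻¹ else 0 with hDdef
    have hDmeas : Measurable D := by
      apply Measurable.ite (hAmeas i) _ measurable_const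
      exact Measurable.inv (Measurable.comp measurable_from_top hNmeas)
    have hintm : Integrable (fun ω => max (V i ω - τ) 0) μ :=
      ((hint i).sub (integrable_const τ)).pos_part
    -- the restricted measure has density D
    have hrestrict : μ.restrict (S i) = μ.withDensity (fun ω => (D ω : ℝ≥0∞)) := by
      refine Measure.ext fun A hA => ?_
      rw [Measure.restrict_apply hA, withDensity_apply _ hA]
      have h2 : (μ (A ∩ S i)).toReal
          = ∫ ω in A, (if τ < V i ω then (1 : ℝ) / (N ω : ℝ) else 0) ∂μ := hunif i A hA
      have hfmeas : Measurable (fun ω => if τ < V i ω then (1 : ℝ) / (N ω : ℝ) else 0) := by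
        apply Measurable.ite (hAmeas i) _ measurable_const
        exact Measurable.div measurable_const
          (Measurable.comp measurable_from_top hNmeas)
      have h3 : ∫ ω in A, (if τ < V i ω then (1 : ℝ) / (N ω : ℝ) else 0) ∂μ
          = (∫⁻ ω in A, ENNReal.ofReal (if τ < V i ω then (1 : ℝ) / (N ω : ℝ) else 0) ∂μ).toReal := by
        apply integral_eq_lintegral_of_nonneg_ae
        · exact Filter.Eventually.of_forall fun ω => by dsimp only; positivity
        · exact hfmeas.aestronglyMeasurable
      have hpt : ∀ ω, ENNReal.ofReal (if τ < V i ω then (1 : ℝ) / (N ω : ℝ) else 0)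
          = (D ω : ℝ≥0∞) := by
        intro ω
        by_cases h : τ < V i ω
        · have hN1 : 0 < N ω := by
            rw [hNdef]
            exact Finset.card_pos.2 ⟨i, Finset.mem_filter.2 ⟨Finset.mem_univ i, h⟩⟩
          simp only [hDdef, if_pos h, one_div]
          rw [ENNReal.ofReal_inv_of_pos (by exact_mod_cast hN1),
            ENNReal.coe_inv (by exact_mod_cast hN1.ne')]
          congr 1
          simp
        · simp [hDdef, h]
      have hDle : ∀ ω, (D ω : ℝ≥0∞) ≤ 1 := by
        intro ω
        rw [hDdef]
        dsimp only
        split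
        · rename_i h
          have hN1 : 0 < N ω := by
            rw [hNdef]
            exact Finset.card_pos.2 ⟨i, Finset.mem_filter.2 ⟨Finset.mem_univ i, h⟩⟩
          rw [show ((1:ℝ≥0∞)) = ((1:ℝ≥0) : ℝ≥0∞) from rfl, ENNReal.coe_le_coe]
          exact inv_le_one_of_one_le₀ (by exact_mod_cast hN1)
        · simp
      have hfin2 : ∫⁻ ω in A, (D ω : ℝ≥0∞) ∂μ ≠ ⊤ := by
        refine ne_top_of_le_ne_top (measure_ne_top μ A) ?_
        calc ∫⁻ ω in A, (D ω : ℝ≥0∞) ∂μ ≤ ∫⁻ _ in A, 1 ∂μ := lintegral_mono fun ω => hDle ω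
          _ = μ A := by simp
      have h4 : ∫⁻ ω in A, ENNReal.ofReal (if τ < V i ω then (1 : ℝ) / (N ω : ℝ) else 0) ∂μ
          = ∫⁻ ω in A, (D ω : ℝ≥0∞) ∂μ := lintegral_congr fun ω => hpt ω
      refine (ENNReal.toReal_eq_toReal_iff' (measure_ne_top μ _) hfin2).mp ?_
      rw [h2, h3, h4]
    -- rewrite the set integral through the density
    have hw : ∫ ω in S i, max (V i ω - τ) 0 ∂μ
        = ∫ ω, (D ω : ℝ) * max (V i ω - τ) 0 ∂μ := by
      rw [show (∫ ω in S i, max (V i ω - τ) 0 ∂μ)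
          = ∫ ω, max (V i ω - τ) 0 ∂(μ.restrict (S i)) from rfl, hrestrict,
        integral_withDensity_eq_integral_smul hDmeas]
      simp only [NNReal.smul_def, smul_eq_mul]
    -- indicator functions of intersections
    set χ : Finset (Fin n) → Ω → ℝ :=
      fun T => Set.indicator (⋂ j ∈ T, {ω | τ < V j ω}) (fun _ => (1:ℝ)) with hχdef
    have hBmeas : ∀ T : Finset (Fin n), MeasurableSet (⋂ j ∈ T, {ω | τ < V j ω}) :=
      fun T => MeasurableSet.biInter (Set.to_countable _) (fun j _ => hAmeas j)
    -- pointwise decomposition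
    have hptd : ∀ ω, (D ω : ℝ) * max (V i ω - τ) 0
        = ∑ T ∈ s.powerset, ((-1:ℝ)) ^ T.card / (T.card + 1)
            * (χ T ω * max (V i ω - τ) 0) := by
      intro ω
      rcases le_or_gt (V i ω) τ with h | h
      · have hm0 : max (V i ω - τ) 0 = 0 := max_eq_right (by linarith)
        rw [hm0]
        simp
      · set b : Finset (Fin n) := s.filter (fun j => τ < V j ω) with hbdef
        have hbs : b ⊆ s := Finset.filter_subset _ _
        have hχval : ∀ T ∈ s.powerset, χ T ω = if T ⊆ b then (1:ℝ) else 0 := by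
          intro T hT
          rw [Finset.mem_powerset] at hT
          have hiff : (ω ∈ ⋂ j ∈ T, {ω | τ < V j ω}) ↔ T ⊆ b := by
            simp only [Set.mem_iInter, Set.mem_setOf_eq]
            constructor
            · intro hall j hj
              rw [hbdef, Finset.mem_filter]
              exact ⟨hT hj, hall j hj⟩
            · intro hsub j hj
              have h2 := hsub hj
              rw [hbdef, Finset.mem_filter] at h2
              exact h2.2
          rw [hχdef]
          simp only
          rw [Set.indicator_apply]
          exact if_congr hiff rfl rfl
        have hsum : ∑ T ∈ s.powerset, ((-1:ℝ)) ^ T.card / (T.card + 1) * χ T ω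
            = 1 / ((b.card : ℝ) + 1) := by
          rw [Finset.sum_congr rfl (fun T hT => by rw [hχval T hT])]
          exact aux_point hbs
        have hib : i ∉ b := by
          intro hib
          have := hbs hib
          rw [hsdef] at this
          exact (Finset.mem_erase.1 this).1 rfl
        have hcard : N ω = b.card + 1 := by
          have hins : Finset.univ.filter (fun j => τ < V j ω) = insert i b := by
            ext j
            simp only [Finset.mem_filter, Finset.mem_univ, true_and, Finset.mem_insert,
              hbdef, hsdef, Finset.mem_erase]
            constructor
            · intro hj
              by_cases hji : j = i
              · exact Or.inl hji
              · exact Or.inr ⟨⟨hji, trivial⟩, hj⟩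
            · rintro (rfl | ⟨-, hj⟩)
              · exact h
              · exact hj
          rw [hNdef]
          simp only
          rw [hins, Finset.card_insert_of_notMem hib]
        have hDval : (D ω : ℝ) = 1 / ((b.card : ℝ) + 1) := by
          rw [hDdef]
          simp only [if_pos h, hcard]
          push_cast
          rw [one_div]
        rw [hDval, ← hsum, Finset.sum_mul]
        exact Finset.sum_congr rfl fun T _ => by ring
    -- integrability of products
    have hintχ : ∀ T : Finset (Fin n),
        Integrable (fun ω => χ T ω * max (V i ω - τ) 0) μ := by
      intro T
      apply Integrable.bdd_mul hintm
      · exact (measurable_const.indicator (hBmeas T)).aestronglyMeasurable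
      · refine Filter.Eventually.of_forall (fun ω => (?_ : ‖χ T ω‖ ≤ 1))
        rw [hχdef]
        by_cases h : ω ∈ ⋂ j ∈ T, {ω | τ < V j ω} <;> simp [h]
    -- per-T integrals
    have hTint : ∀ T ∈ s.powerset, ∫ ω, χ T ω * max (V i ω - τ) 0 ∂μ
        = p ^ T.card * ∫ ω, max (V i ω - τ) 0 ∂μ := by
      intro T hT
      rw [Finset.mem_powerset] at hT
      have hiT : i ∉ T := by
        intro hiT
        have := hT hiT
        rw [hsdef] at this
        exact (Finset.mem_erase.1 this).1 rfl
      have hbase := hindep.indepFun_finset T {i}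
        (Finset.disjoint_singleton_right.2 hiT) hmeas
      have hψm : Measurable (fun v : (j : T) → ℝ => if ∀ j, τ < v j then (1:ℝ) else 0) := by
        have hset : MeasurableSet {v : (j : T) → ℝ | ∀ j, τ < v j} := by
          have he : {v : (j : T) → ℝ | ∀ j, τ < v j}
              = ⋂ j, (fun v : (j : T) → ℝ => v j) ⁻¹' (Set.Ioi τ) := by
            ext v
            simp [Set.mem_iInter]
          rw [he]
          exact MeasurableSet.iInter fun j => measurable_pi_apply j measurableSet_Ioi
        exact Measurable.ite hset measurable_const measurable_const
      have hφm : Measurable (fun v : (j : ({i} : Finset (Fin n))) → ℝ =>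
          max (v ⟨i, Finset.mem_singleton_self i⟩ - τ) 0) :=
        ((measurable_pi_apply _).sub measurable_const).max measurable_const
      have hIF : IndepFun (fun ω => χ T ω) (fun ω => max (V i ω - τ) 0) μ := by
        have hcmp := hbase.comp hψm hφm
        have e1 : ((fun v : (j : T) → ℝ => if ∀ j, τ < v j then (1:ℝ) else 0)
            ∘ (fun a (j : T) => V j a)) = fun ω => χ T ω := by
          funext ω
          simp only [Function.comp_apply, hχdef, Set.indicator_apply, Set.mem_iInter,
            Set.mem_setOf_eq]
          refine if_congr ?_ rfl rfl
          constructor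
          · intro hall j hj
            exact hall ⟨j, hj⟩
          · intro hall j
            exact hall j j.2
        rw [e1] at hcmp
        exact hcmp
      have hχint : Integrable (fun ω => χ T ω) μ :=
        (integrable_const (1:ℝ)).indicator (hBmeas T)
      have heq : ∫ ω, χ T ω * max (V i ω - τ) 0 ∂μ
          = (∫ ω, χ T ω ∂μ) * ∫ ω, max (V i ω - τ) 0 ∂μ :=
        IndepFun.integral_mul_eq_mul_integral hIF hχint.aestronglyMeasurable hintm.aestronglyMeasurable
      rw [heq]
      congr 1
      rw [hχdef]
      simp only
      rw [integral_indicator_const (1:ℝ) (hBmeas T), smul_eq_mul, mul_one]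
      exact hmuB T
    -- put it together
    rw [hw]
    calc ∫ ω, (D ω : ℝ) * max (V i ω - τ) 0 ∂μ
        = ∫ ω, ∑ T ∈ s.powerset, ((-1:ℝ)) ^ T.card / (T.card + 1)
            * (χ T ω * max (V i ω - τ) 0) ∂μ := by simp only [hptd]
      _ = ∑ T ∈ s.powerset, ∫ ω, ((-1:ℝ)) ^ T.card / (T.card + 1)
            * (χ T ω * max (V i ω - τ) 0) ∂μ :=
          integral_finset_sum _ (fun T _ => (hintχ T).const_mul _)
      _ = ∑ T ∈ s.powerset, ((-1:ℝ)) ^ T.card / (T.card + 1)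
            * (p ^ T.card * ∫ ω, max (V i ω - τ) 0 ∂μ) := by
          refine Finset.sum_congr rfl fun T hT => ?_
          rw [integral_const_mul, hTint T hT]
      _ = (∑ T ∈ s.powerset, (-p) ^ T.card / (T.card + 1))
            * ∫ ω, max (V i ω - τ) 0 ∂μ := by
          rw [Finset.sum_mul]
          refine Finset.sum_congr rfl fun T hT => ?_
          have hnp : (-p) ^ T.card = (-1:ℝ) ^ T.card * p ^ T.card := by
            rw [← neg_one_mul, mul_pow]
          rw [hnp]
          ring
      _ = ((1 - q ^ n) / (n * p)) * ∫ ω, max (V i ω - τ) 0 ∂μ := by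
          rw [aux_pow s p hp.ne']
          have hc1 : ((s.card : ℝ) + 1) = (n : ℝ) := by exact_mod_cast hscard
          rw [hscard, hc1, hpdef]
          congr 1; ring
  -- assemble
  have hfinal : ∫ ω, ALG ω ∂μ
      = (1 - q ^ n) * τ + ((1 - q ^ n) / (n * p)) * ∑ i, ∫ ω, max (V i ω - τ) 0 ∂μ := by
    rw [hALGsum]
    rw [Finset.sum_congr rfl (fun i _ => by rw [hSint i, hkey i])]
    rw [Finset.sum_add_distrib, ← Finset.mul_sum, ← Finset.mul_sum, hSsum]
    ring
  rw [hfinal]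
  have hcoef : (1 / (n : ℝ)) * (1 - q ^ n) / (1 - q) = (1 - q ^ n) / (n * p) := by
    rw [hpdef]
    field_simp
  rw [hcoef]
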